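/- Let U: ℝ × ℝ² → ℝ be continuous with |U(t,x)| ≤ C(1 + |x|^α) for some C > 0 and α ∈ (0,2). Then there exists K' > 0 such that for all x ∈ 𝒳, A_T(x) ≥ ∫₀ᵀ (|ẋ(t)|²/4 + |x(t)|²/(8K)) dt − (K' + C)T, where K = 2T² is the Poincaré constant; in particular A_T is coercive on 𝒳. -/

import Mathlib

open MeasureTheory Set

/-- `x : [0,T] → ℝ²` (modeled as `ℂ`) is `H¹` with (weak) derivative `x'`. -/
def IsH1 (T : ℝ) (x x' : ℝ → ℂ) : Prop :=
  Continuous x ∧ IntervalIntegrable x' volume 0 T ∧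
  IntervalIntegrable (fun t => ‖x' t‖ ^ 2) volume 0 T ∧
  ∀ t ∈ Set.Icc (0 : ℝ) T, x t = x 0 + ∫ s in (0 : ℝ)..t, x' s

/-- `x` has nonzero winding number around the origin on `[0,T]`. -/
def Winds (T : ℝ) (x : ℝ → ℂ) : Prop :=
  ∃ θ : ℝ → ℝ, ContinuousOn θ (Set.Icc 0 T) ∧
    (∀ t ∈ Set.Icc (0 : ℝ) T,
      x t = (‖x t‖ : ℂ) * Complex.exp ((θ t : ℂ) * Complex.I)) ∧
    ∃ k : ℤ, k ≠ 0 ∧ θ T - θ 0 = 2 * Real.pi * (k : ℝ)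

/-- `x ∈ 𝒳 = 𝒳_c ∪ 𝒳_r`. -/
def MemX (T : ℝ) (x : ℝ → ℂ) : Prop :=
  (∃ t₀ ∈ Set.Icc (0 : ℝ) T, x t₀ = 0) ∨
    ((∀ t ∈ Set.Icc (0 : ℝ) T, x t ≠ 0) ∧ Winds T x)

/-- **coercivity estimate.** If `U` is continuous with
`|U(t,x)| ≤ C(1+|x|^α)`, `α ∈ (0,2)`, then there is `K' > 0` such that for every `x ∈ 𝒳`,
`A_T(x) ≥ ∫₀ᵀ (|ẋ|²/4 + |x|²/(8K)) dt − (K'+C)T`, where `K = 2T²`. -/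

lemma young_aux (C δ α s : ℝ) (hC : 0 < C) (hδ : 0 < δ) (hα0 : 0 < α) (hα2 : α < 2)
    (hs : 0 ≤ s) :
    C * s ^ α ≤ δ * s ^ 2 + C * (1 + ((C / δ) ^ (1 / (2 - α))) ^ α) := by
  set R : ℝ := (C / δ) ^ (1 / (2 - α)) with hRdef
  have hRpos : 0 < R := Real.rpow_pos_of_pos (div_pos hC hδ) _
  have hδs : 0 ≤ δ * s ^ 2 := by positivity
  rcases le_or_gt s R with h | h
  · have h1 : s ^ α ≤ R ^ α := Real.rpow_le_rpow hs h hα0.le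
    nlinarith
  · have hspos : 0 < s := hRpos.trans h
    have key : s ^ α = s ^ (2:ℕ) * s ^ (α - 2) := by
      rw [← Real.rpow_natCast s 2, ← Real.rpow_add hspos]
      norm_num
    have h1 : s ^ (α - 2) ≤ R ^ (α - 2) := by
      rw [show α - 2 = -(2 - α) by ring, Real.rpow_neg hspos.le, Real.rpow_neg hRpos.le]
      exact inv_anti₀ (Real.rpow_pos_of_pos hRpos _)
        (Real.rpow_le_rpow hRpos.le h.le (by linarith))
    have hReq : C * R ^ (α - 2) = δ := by
      rw [hRdef, ← Real.rpow_mul (div_pos hC hδ).le]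
      have h2α : (2 : ℝ) - α ≠ 0 := by linarith
      have : 1 / (2 - α) * (α - 2) = -1 := by field_simp; ring
      rw [this, Real.rpow_neg_one]
      field_simp
    have hRαnn : 0 ≤ R ^ α := Real.rpow_nonneg hRpos.le α
    have hs2 : (0:ℝ) ≤ s ^ (2:ℕ) := by positivity
    calc C * s ^ α = (C * s ^ (α - 2)) * s ^ (2:ℕ) := by rw [key]; ring
      _ ≤ δ * s ^ (2:ℕ) := by
          apply mul_le_mul_of_nonneg_right _ hs2
          calc C * s ^ (α-2) ≤ C * R ^ (α-2) := by
                exact mul_le_mul_of_nonneg_left h1 hC.le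
            _ = δ := hReq
      _ ≤ δ * s ^ 2 + C * (1 + R ^ α) := by nlinarith

lemma sup_bound (T : ℝ) (hT : 0 < T) (x x' : ℝ → ℂ) (h1 : IsH1 T x x')
    (hper : x 0 = x T) (hmem : MemX T x) :
    ∀ t ∈ Set.Icc (0 : ℝ) T, ‖x t‖ ≤ ∫ s in (0:ℝ)..T, ‖x' s‖ := by
  obtain ⟨hcont, hint, hint2, hrep⟩ := h1
  set L : ℝ := ∫ s in (0:ℝ)..T, ‖x' s‖ with hLdef
  have hnormint : IntervalIntegrable (fun s => ‖x' s‖) volume 0 T := hint.norm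
  have hsubint : ∀ a b : ℝ, a ∈ Set.Icc (0:ℝ) T → b ∈ Set.Icc (0:ℝ) T →
      IntervalIntegrable x' volume a b := fun a b ha hb =>
    hint.mono_set (Set.uIcc_subset_uIcc (by rw [Set.uIcc_of_le hT.le]; exact ha)
      (by rw [Set.uIcc_of_le hT.le]; exact hb))
  -- displacement bound
  have hdiff : ∀ s ∈ Set.Icc (0:ℝ) T, ∀ t ∈ Set.Icc (0:ℝ) T, s ≤ t →
      ‖x t - x s‖ ≤ ∫ u in s..t, ‖x' u‖ := by
    intro s hs t ht hst
    have heq : x t - x s = ∫ u in s..t, x' u := by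
      rw [hrep t ht, hrep s hs]
      have := intervalIntegral.integral_interval_sub_left
        (hsubint 0 t ⟨le_refl 0, hT.le⟩ ht) (hsubint 0 s ⟨le_refl 0, hT.le⟩ hs)
      rw [add_sub_add_left_eq_sub, this]
    rw [heq]
    exact intervalIntegral.norm_integral_le_integral_norm hst
  -- monotonicity of the arc-length integral
  have hmono : ∀ a b : ℝ, a ∈ Set.Icc (0:ℝ) T → b ∈ Set.Icc (0:ℝ) T → a ≤ b →
      (∫ u in a..b, ‖x' u‖) ≤ L := by
    intro a b ha hb hab
    exact intervalIntegral.integral_mono_interval ha.1 hab hb.2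
      (Filter.Eventually.of_forall fun u => norm_nonneg _) hnormint
  have hLnn : 0 ≤ L :=
    intervalIntegral.integral_nonneg hT.le fun u _ => norm_nonneg _
  rcases hmem with ⟨t₀, ht₀, hx₀⟩ | ⟨hne, θ, hθc, hθeq, k, hk, hkey⟩
  · -- collision case
    intro t ht
    rcases le_total t₀ t with h | h
    · have := hdiff t₀ ht₀ t ht h
      rw [hx₀, sub_zero] at this
      exact this.trans (hmono t₀ t ht₀ ht h)
    · have := hdiff t ht t₀ ht₀ h
      rw [hx₀, zero_sub, norm_neg] at this
      exact this.trans (hmono t t₀ ht ht₀ h)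
  · -- winding case: find t₂ with θ t₂ = θ 0 ± π
    have hπ := Real.pi_pos
    have h0mem : (0:ℝ) ∈ Set.Icc (0:ℝ) T := ⟨le_refl 0, hT.le⟩
    have hTmem : T ∈ Set.Icc (0:ℝ) T := ⟨hT.le, le_refl T⟩
    obtain ⟨t₂, ht₂, hθt₂⟩ : ∃ t₂ ∈ Set.Icc (0:ℝ) T,
        θ t₂ = θ 0 + Real.pi ∨ θ t₂ = θ 0 - Real.pi := by
      rcases lt_or_gt_of_ne hk with hkneg | hkpos
      · have hkle' : k ≤ -1 := by omega
        have hkle : (k:ℝ) ≤ -1 := by exact_mod_cast hkle'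
        have hval : θ 0 - Real.pi ∈ Set.Icc (θ T) (θ 0) := by
          constructor <;> nlinarith
        obtain ⟨t₂, ht₂, hv⟩ := intermediate_value_Icc' hT.le hθc hval
        exact ⟨t₂, ht₂, Or.inr hv⟩
      · have hkge : (1:ℝ) ≤ (k:ℝ) := by exact_mod_cast hkpos
        have hval : θ 0 + Real.pi ∈ Set.Icc (θ 0) (θ T) := by
          constructor <;> nlinarith
        obtain ⟨t₂, ht₂, hv⟩ := intermediate_value_Icc hT.le hθc hval
        exact ⟨t₂, ht₂, Or.inl hv⟩
    -- x t₂ points opposite to x 0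
    have hexp : Complex.exp ((θ t₂ : ℂ) * Complex.I)
        = -Complex.exp ((θ 0 : ℂ) * Complex.I) := by
      rcases hθt₂ with h | h
      · rw [h]
        push_cast
        rw [add_mul, Complex.exp_add, Complex.exp_pi_mul_I]
        ring
      · rw [h]
        push_cast
        rw [sub_mul, Complex.exp_sub, Complex.exp_pi_mul_I]
        field_simp
    have hx₂ : x t₂ = -((‖x t₂‖ : ℂ) * Complex.exp ((θ 0 : ℂ) * Complex.I)) := by
      conv_lhs => rw [hθeq t₂ ht₂, hexp]
      ring
    have hx0eq : x 0 = (‖x 0‖ : ℂ) * Complex.exp ((θ 0 : ℂ) * Complex.I) := hθeq 0 h0mem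
    have hkeynorm : ‖x 0 - x t₂‖ = ‖x 0‖ + ‖x t₂‖ := by
      have heq2 : x 0 - x t₂ =
          ((‖x 0‖ + ‖x t₂‖ : ℝ) : ℂ) * Complex.exp ((θ 0 : ℂ) * Complex.I) := by
        conv_lhs => rw [hx0eq, hx₂]
        push_cast; ring
      rw [heq2, norm_mul]
      have he : ‖Complex.exp ((θ 0 : ℂ) * Complex.I)‖ = 1 := by
        exact Complex.norm_exp_ofReal_mul_I (θ 0)
      rw [he, mul_one, Complex.norm_real, Real.norm_eq_abs,
        abs_of_nonneg (by positivity)]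
    -- now the pointwise bound
    intro t ht
    have htri1 : ‖x t‖ ≤ ‖x 0‖ + ‖x t - x 0‖ := by
      calc ‖x t‖ = ‖x 0 + (x t - x 0)‖ := by ring_nf
        _ ≤ ‖x 0‖ + ‖x t - x 0‖ := norm_add_le _ _
    have htri2 : ‖x t‖ ≤ ‖x t₂‖ + ‖x t - x t₂‖ := by
      calc ‖x t‖ = ‖x t₂ + (x t - x t₂)‖ := by ring_nf
        _ ≤ ‖x t₂‖ + ‖x t - x t₂‖ := norm_add_le _ _
    have hd02 : ‖x 0 - x t₂‖ ≤ ∫ u in (0:ℝ)..t₂, ‖x' u‖ := by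
      have := hdiff 0 h0mem t₂ ht₂ ht₂.1
      rwa [← norm_neg, neg_sub] at this
    rcases le_total t t₂ with h | h
    · have h1 : ‖x t - x 0‖ ≤ ∫ u in (0:ℝ)..t, ‖x' u‖ := hdiff 0 h0mem t ht ht.1
      have h2 : ‖x t - x t₂‖ ≤ ∫ u in t..t₂, ‖x' u‖ := by
        have := hdiff t ht t₂ ht₂ h
        rwa [← norm_neg, neg_sub] at this
      have hadd : (∫ u in (0:ℝ)..t, ‖x' u‖) + ∫ u in t..t₂, ‖x' u‖
          = ∫ u in (0:ℝ)..t₂, ‖x' u‖ :=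
        intervalIntegral.integral_add_adjacent_intervals
          (hnormint.mono_set (Set.uIcc_subset_uIcc (by rw [Set.uIcc_of_le hT.le]; exact h0mem)
            (by rw [Set.uIcc_of_le hT.le]; exact ht)))
          (hnormint.mono_set (Set.uIcc_subset_uIcc (by rw [Set.uIcc_of_le hT.le]; exact ht)
            (by rw [Set.uIcc_of_le hT.le]; exact ht₂)))
      have hle := hmono 0 t₂ h0mem ht₂ ht₂.1
      linarith [hkeynorm ▸ hd02]
    · have h2 : ‖x t - x t₂‖ ≤ ∫ u in t₂..t, ‖x' u‖ := hdiff t₂ ht₂ t ht h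
      have h1 : ‖x t - x 0‖ ≤ ∫ u in t..T, ‖x' u‖ := by
        have := hdiff t ht T hTmem ht.2
        rw [← hper] at this
        rwa [← norm_neg, neg_sub] at this
      have haddA : (∫ u in (0:ℝ)..t₂, ‖x' u‖) + ∫ u in t₂..t, ‖x' u‖
          = ∫ u in (0:ℝ)..t, ‖x' u‖ :=
        intervalIntegral.integral_add_adjacent_intervals
          (hnormint.mono_set (Set.uIcc_subset_uIcc (by rw [Set.uIcc_of_le hT.le]; exact h0mem)
            (by rw [Set.uIcc_of_le hT.le]; exact ht₂)))
          (hnormint.mono_set (Set.uIcc_subset_uIcc (by rw [Set.uIcc_of_le hT.le]; exact ht₂)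
            (by rw [Set.uIcc_of_le hT.le]; exact ht)))
      have haddB : (∫ u in (0:ℝ)..t, ‖x' u‖) + ∫ u in t..T, ‖x' u‖ = L :=
        intervalIntegral.integral_add_adjacent_intervals
          (hnormint.mono_set (Set.uIcc_subset_uIcc (by rw [Set.uIcc_of_le hT.le]; exact h0mem)
            (by rw [Set.uIcc_of_le hT.le]; exact ht)))
          (hnormint.mono_set (Set.uIcc_subset_uIcc (by rw [Set.uIcc_of_le hT.le]; exact ht)
            (by rw [Set.uIcc_of_le hT.le]; exact hTmem)))
      have hxtnn : 0 ≤ ‖x t‖ := norm_nonneg _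
      linarith [hkeynorm ▸ hd02]

theorem action_coercive (T C α : ℝ) (hT : 0 < T) (hC : 0 < C)
    (hα : α ∈ Set.Ioo (0 : ℝ) 2)
    (U : ℝ → ℂ → ℝ) (hU : Continuous fun p : ℝ × ℂ => U p.1 p.2)
    (hgrowth : ∀ t z, |U t z| ≤ C * (1 + ‖z‖ ^ α)) :
    ∃ K' > 0, ∀ x x' : ℝ → ℂ, IsH1 T x x' → x 0 = x T → MemX T x →
      IntervalIntegrable (fun t => 1 / ‖x t‖) volume 0 T →
      (∫ t in (0 : ℝ)..T, ((‖x' t‖ ^ 2) / 4 + (‖x t‖ ^ 2) / (8 * (2 * T ^ 2))))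
          - (K' + C) * T
        ≤ ∫ t in (0 : ℝ)..T, ((1 / 2) * ‖x' t‖ ^ 2 + 1 / ‖x t‖ + U t (x t)) := by
  obtain ⟨hα0, hα2⟩ := hα
  set M0 : ℝ := C * (1 + ((C / (1 / (32 * T ^ 2))) ^ (1 / (2 - α))) ^ α) with hM0def
  have hM0nn : 0 ≤ M0 := by
    apply mul_nonneg hC.le
    have := Real.rpow_nonneg
      (Real.rpow_nonneg (le_of_lt (by positivity : (0:ℝ) < C / (1 / (32 * T ^ 2))))
        (1 / (2 - α))) α
    linarith
  refine ⟨M0 + 1, by linarith, ?_⟩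
  intro x x' h1 hper hmem hinv
  have hsup := sup_bound T hT x x' h1 hper hmem
  obtain ⟨hcont, hint, hint2, hrep⟩ := h1
  set L : ℝ := ∫ s in (0:ℝ)..T, ‖x' s‖ with hLdef
  set E : ℝ := ∫ t in (0:ℝ)..T, ‖x' t‖ ^ 2 with hEdef
  set P : ℝ := ∫ t in (0:ℝ)..T, ‖x t‖ ^ 2 with hPdef
  have hnormint : IntervalIntegrable (fun s => ‖x' s‖) volume 0 T := hint.norm
  have hixsq : IntervalIntegrable (fun t => ‖x t‖ ^ 2) volume 0 T :=
    ((hcont.norm.pow 2)).intervalIntegrable 0 T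
  have hUcont : Continuous fun t => U t (x t) := hU.comp (continuous_id.prodMk hcont)
  have hiU : IntervalIntegrable (fun t => U t (x t)) volume 0 T :=
    hUcont.intervalIntegrable 0 T
  have hE0 : 0 ≤ E := intervalIntegral.integral_nonneg hT.le fun u _ => sq_nonneg _
  have hL0 : 0 ≤ L := intervalIntegral.integral_nonneg hT.le fun u _ => norm_nonneg _
  have hP0 : 0 ≤ P := intervalIntegral.integral_nonneg hT.le fun u _ => sq_nonneg _
  -- Cauchy–Schwarz: L² ≤ T·E
  have hq : (L / T) * T = L := div_mul_cancel₀ L hT.ne'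
  have hvar : (0:ℝ) ≤ ∫ t in (0:ℝ)..T, (‖x' t‖ - L / T) ^ 2 :=
    intervalIntegral.integral_nonneg hT.le fun u _ => sq_nonneg _
  have hvareq : ∫ t in (0:ℝ)..T, (‖x' t‖ - L / T) ^ 2
      = E - (2 * (L / T)) * L + (L / T) ^ 2 * T := by
    have hcongr : EqOn (fun t => (‖x' t‖ - L / T) ^ 2)
        (fun t => (‖x' t‖ ^ 2 - (2 * (L / T)) * ‖x' t‖) + (L / T) ^ 2)
        (Set.uIcc (0:ℝ) T) := fun t _ => by simp only; ring
    rw [intervalIntegral.integral_congr hcongr,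
      intervalIntegral.integral_add (hint2.sub (hnormint.const_mul _))
        intervalIntegrable_const,
      intervalIntegral.integral_sub hint2 (hnormint.const_mul _),
      intervalIntegral.integral_const_mul, intervalIntegral.integral_const]
    simp only [smul_eq_mul, sub_zero]
    ring
  have hL2 : L ^ 2 ≤ T * E := by
    have key : (0:ℝ) ≤ E - (2 * (L / T)) * L + (L / T) ^ 2 * T := hvareq ▸ hvar
    have hq2 : (L / T) ^ 2 * T ^ 2 = L ^ 2 := by
      rw [div_pow, div_mul_cancel₀ _ (pow_ne_zero 2 hT.ne')]
    have hq3 : (L / T) * L * T = L ^ 2 := by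
      field_simp
    nlinarith [mul_nonneg key hT.le]
  -- P ≤ T²·E
  have hPle : P ≤ (T - 0) * L ^ 2 := by
    have := intervalIntegral.integral_mono_on hT.le hixsq intervalIntegrable_const
      (fun t ht => pow_le_pow_left₀ (norm_nonneg _) (hsup t ht) 2)
    simpa [smul_eq_mul] using this
  have hPTE : P ≤ T ^ 2 * E := by nlinarith
  -- value of the left-hand integral
  have hLHS : ∫ t in (0:ℝ)..T, ((‖x' t‖ ^ 2) / 4 + (‖x t‖ ^ 2) / (8 * (2 * T ^ 2)))
      = E / 4 + P / (8 * (2 * T ^ 2)) := by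
    rw [intervalIntegral.integral_add (hint2.div_const 4) (hixsq.div_const _),
      intervalIntegral.integral_div, intervalIntegral.integral_div]
  -- lower bound for the right-hand integral
  have hGint : IntervalIntegrable
      (fun t => ‖x' t‖ ^ 2 / 2 - ‖x t‖ ^ 2 / (32 * T ^ 2) - (C + M0)) volume 0 T :=
    ((hint2.div_const 2).sub (hixsq.div_const _)).sub intervalIntegrable_const
  have hFint : IntervalIntegrable
      (fun t => (1 / 2) * ‖x' t‖ ^ 2 + 1 / ‖x t‖ + U t (x t)) volume 0 T :=
    ((hint2.const_mul (1 / 2)).add hinv).add hiU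
  have hRHSge : ∫ t in (0:ℝ)..T,
        (‖x' t‖ ^ 2 / 2 - ‖x t‖ ^ 2 / (32 * T ^ 2) - (C + M0))
      ≤ ∫ t in (0:ℝ)..T, ((1 / 2) * ‖x' t‖ ^ 2 + 1 / ‖x t‖ + U t (x t)) := by
    apply intervalIntegral.integral_mono_on hT.le hGint hFint
    intro t ht
    have hUb := (abs_le.mp (hgrowth t (x t))).1
    have hy := young_aux C (1 / (32 * T ^ 2)) α ‖x t‖ hC (by positivity) hα0 hα2
      (norm_nonneg _)
    have hinv0 : (0:ℝ) ≤ 1 / ‖x t‖ := by positivity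
    have hexp1 : C * (1 + ‖x t‖ ^ α) = C + C * ‖x t‖ ^ α := by ring
    have hexp2 : (1 / (32 * T ^ 2)) * ‖x t‖ ^ 2 = ‖x t‖ ^ 2 / (32 * T ^ 2) := by ring
    rw [hexp1] at hUb
    rw [hexp2, ← hM0def] at hy
    linarith
  have hGval : ∫ t in (0:ℝ)..T,
        (‖x' t‖ ^ 2 / 2 - ‖x t‖ ^ 2 / (32 * T ^ 2) - (C + M0))
      = E / 2 - P / (32 * T ^ 2) - (C + M0) * T := by
    rw [intervalIntegral.integral_sub ((hint2.div_const 2).sub (hixsq.div_const _))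
        intervalIntegrable_const,
      intervalIntegral.integral_sub (hint2.div_const 2) (hixsq.div_const _),
      intervalIntegral.integral_div, intervalIntegral.integral_div,
      intervalIntegral.integral_const]
    simp only [smul_eq_mul, sub_zero]
    ring
  -- final arithmetic
  have hT2 : (0:ℝ) < T ^ 2 := by positivity
  have hd1 : P / (8 * (2 * T ^ 2)) ≤ E / 16 := by
    rw [div_le_div_iff₀ (by positivity) (by norm_num)]
    nlinarith
  have hd3 : P / (32 * T ^ 2) ≤ E / 32 := by
    rw [div_le_div_iff₀ (by positivity) (by norm_num)]
    nlinarith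
  rw [hLHS]
  have := hGval ▸ hRHSge
  linarith
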